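/- Consider NCE for 1d Gaussian mean estimation with P* = N(R,1), Q = N(0,1), parameterization τ = [b,c], T(x) = [x,−1]. For every τ = [b,c] ∈ R², the gradient norm satisfies ||∇L(τ)||₂ ≤ 32·max{R, |b|}. -/

import Mathlib

open MeasureTheory

/-- Noise density `q = N(0,1)`. -/
noncomputable def qpdf (x : ℝ) : ℝ :=
  (1 / Real.sqrt (2 * Real.pi)) * Real.exp (-x ^ 2 / 2)

/-- Data density `p* = N(R,1)`. -/
noncomputable def ppdf (R x : ℝ) : ℝ :=
  (1 / Real.sqrt (2 * Real.pi)) * Real.exp (-(x - R) ^ 2 / 2)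

/-- Model density `p(x) = exp(−x²/2 + bx − c)` for parameter `τ = [b,c]`. -/
noncomputable def pmodel (b c x : ℝ) : ℝ :=
  Real.exp (-x ^ 2 / 2 + b * x - c)

/-- The gradient of the NCE loss, `∇L(τ) = (1/2) ∫ (p−p*)/(p/q + 1) T(x) dx` with
`T(x) = [x, −1]`. -/
noncomputable def gradNCE (R b c : ℝ) (i : Fin 2) : ℝ :=
  (1 / 2) * ∫ x : ℝ, ((pmodel b c x - ppdf R x) / (pmodel b c x / qpdf x + 1)) *
    ![x, (-1 : ℝ)] i

lemma integrableG (a s : ℝ) (hs : 0 < s) :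
    Integrable (fun x : ℝ => Real.exp (-(x - a) ^ 2 / s)) := by
  have h := (integrable_exp_neg_mul_sq (show (0:ℝ) < 1 / s by positivity)).comp_sub_right a
  convert h using 2 with x
  rw [neg_div]
  ring_nf

lemma integralG (a s : ℝ) (hs : 0 < s) :
    ∫ x : ℝ, Real.exp (-(x - a) ^ 2 / s) = Real.sqrt (s * Real.pi) := by
  rw [integral_sub_right_eq_self (fun y : ℝ => Real.exp (-y ^ 2 / s)) a]
  have h := integral_gaussian (1 / s)
  have heq : ∀ x : ℝ, Real.exp (-(1 / s) * x ^ 2) = Real.exp (-x ^ 2 / s) := by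
    intro x; rw [neg_div]; ring_nf
  simp_rw [heq] at h
  rw [h]
  congr 1
  field_simp

lemma key_abs_exp (y : ℝ) : |y| * Real.exp (-y ^ 2 / 2) ≤ Real.exp (-y ^ 2 / 4) := by
  have h1 : |y| ≤ Real.exp (y ^ 2 / 4) := by
    have h2 : y ^ 2 / 4 + 1 ≤ Real.exp (y ^ 2 / 4) := Real.add_one_le_exp _
    nlinarith [sq_abs y, sq_nonneg (|y| - 2)]
  calc |y| * Real.exp (-y ^ 2 / 2) ≤ Real.exp (y ^ 2 / 4) * Real.exp (-y ^ 2 / 2) :=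
        mul_le_mul_of_nonneg_right h1 (Real.exp_pos _).le
    _ = Real.exp (-y ^ 2 / 4) := by rw [← Real.exp_add]; ring_nf

lemma core_bound (R b c x : ℝ) :
    |(pmodel b c x - ppdf R x) / (pmodel b c x / qpdf x + 1)| ≤ qpdf x + ppdf R x := by
  have hpi := Real.pi_pos
  have hq : 0 < qpdf x := by unfold qpdf; positivity
  have hp : 0 < pmodel b c x := Real.exp_pos _
  have hps : 0 < ppdf R x := by unfold ppdf; positivity
  set p := pmodel b c x
  set q := qpdf x
  set ps := ppdf R x
  have hD : p / q + 1 = (p + q) / q := by field_simp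
  rw [hD, div_div_eq_mul_div, abs_div, abs_of_pos (by positivity : (0:ℝ) < p + q),
    div_le_iff₀ (by positivity)]
  have h1 : |(p - ps) * q| ≤ (p + ps) * q := by
    rw [abs_mul, abs_of_pos hq]
    exact mul_le_mul_of_nonneg_right (abs_le.mpr ⟨by linarith, by linarith⟩) hq.le
  nlinarith [sq_nonneg q, mul_pos hps hp]

/-- For 1d Gaussian NCE (`P* = N(R,1)`, `Q = N(0,1)`, `τ = [b,c]`, `T(x) = [x,−1]`), the
gradient norm satisfies `‖∇L(τ)‖₂ ≤ 32·max{R, |b|}` for every `τ ∈ ℝ²` (for `R` large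
enough). -/
theorem nce_gradient_norm_bound :
    ∃ R0 : ℝ, ∀ R : ℝ, R0 ≤ R → ∀ b c : ℝ,
      Real.sqrt ((gradNCE R b c 0) ^ 2 + (gradNCE R b c 1) ^ 2) ≤ 32 * max R |b| := by
  refine ⟨1, fun R hR b c => ?_⟩
  have hpi := Real.pi_pos
  have hs2pi : (0:ℝ) < Real.sqrt (2 * Real.pi) := Real.sqrt_pos.mpr (by positivity)
  have hR0 : (0:ℝ) < R := by linarith
  set K : ℝ := 1 / Real.sqrt (2 * Real.pi) with hK
  have hKpos : 0 < K := by positivity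
  -- bound on gradNCE 1
  have hb1 : |gradNCE R b c 1| ≤ 1 := by
    unfold gradNCE
    simp only [Matrix.cons_val_one, Matrix.head_cons, Matrix.cons_val_zero]
    rw [abs_mul, abs_of_pos (by norm_num : (0:ℝ) < 1/2)]
    have hdom : Integrable (fun x : ℝ => qpdf x + ppdf R x) := by
      unfold qpdf ppdf
      refine Integrable.add ?_ ?_
      · simpa only [sub_zero] using (integrableG 0 2 (by norm_num)).const_mul K
      · exact (integrableG R 2 (by norm_num)).const_mul K
    have hle : ‖∫ x : ℝ, (pmodel b c x - ppdf R x) / (pmodel b c x / qpdf x + 1) * (-1)‖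
        ≤ ∫ x : ℝ, (qpdf x + ppdf R x) := by
      refine norm_integral_le_of_norm_le hdom (Filter.Eventually.of_forall fun x => ?_)
      rw [Real.norm_eq_abs, abs_mul, abs_neg, abs_one, mul_one]
      exact core_bound R b c x
    have hint : ∫ x : ℝ, (qpdf x + ppdf R x) = 2 := by
      unfold qpdf ppdf
      rw [integral_add]
      · have e1 : ∫ x : ℝ, K * Real.exp (-x ^ 2 / 2)
            = K * Real.sqrt (2 * Real.pi) := by
          rw [integral_const_mul]
          have := integralG 0 2 (by norm_num)
          simp only [sub_zero] at this
          rw [this]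
        have e2 : ∫ x : ℝ, K * Real.exp (-(x - R) ^ 2 / 2)
            = K * Real.sqrt (2 * Real.pi) := by
          rw [integral_const_mul, integralG R 2 (by norm_num)]
        rw [e1, e2, hK]
        field_simp
        norm_num
      · simpa only [sub_zero] using (integrableG 0 2 (by norm_num)).const_mul K
      · exact (integrableG R 2 (by norm_num)).const_mul K
    rw [Real.norm_eq_abs] at hle
    rw [hint] at hle
    linarith
  -- bound on gradNCE 0
  have hb0 : |gradNCE R b c 0| ≤ Real.sqrt 2 + R / 2 := by
    unfold gradNCE
    simp only [Matrix.cons_val_zero]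
    rw [abs_mul, abs_of_pos (by norm_num : (0:ℝ) < 1/2)]
    set g : ℝ → ℝ := fun x =>
      K * Real.exp (-x ^ 2 / 4) + (K * Real.exp (-(x - R) ^ 2 / 4)
        + (K * R) * Real.exp (-(x - R) ^ 2 / 2)) with hg
    have hi1 : Integrable (fun x : ℝ => K * Real.exp (-x ^ 2 / 4)) := by
      simpa only [sub_zero] using (integrableG 0 4 (by norm_num)).const_mul K
    have hi2 : Integrable (fun x : ℝ => K * Real.exp (-(x - R) ^ 2 / 4)) :=
      (integrableG R 4 (by norm_num)).const_mul K
    have hi3 : Integrable (fun x : ℝ => (K * R) * Real.exp (-(x - R) ^ 2 / 2)) :=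
      (integrableG R 2 (by norm_num)).const_mul (K * R)
    have hdom : Integrable g := hi1.add (hi2.add hi3)
    have hle : ‖∫ x : ℝ, (pmodel b c x - ppdf R x) / (pmodel b c x / qpdf x + 1) * x‖
        ≤ ∫ x : ℝ, g x := by
      refine norm_integral_le_of_norm_le hdom (Filter.Eventually.of_forall fun x => ?_)
      rw [Real.norm_eq_abs, abs_mul]
      have h1 : |(pmodel b c x - ppdf R x) / (pmodel b c x / qpdf x + 1)| * |x|
          ≤ (qpdf x + ppdf R x) * |x| :=
        mul_le_mul_of_nonneg_right (core_bound R b c x) (abs_nonneg x)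
      refine h1.trans ?_
      have hq : qpdf x * |x| ≤ K * Real.exp (-x ^ 2 / 4) := by
        unfold qpdf
        rw [mul_comm (K * Real.exp (-x ^ 2 / 2)) |x|, ← mul_assoc]
        rw [mul_comm |x| K, mul_assoc]
        exact mul_le_mul_of_nonneg_left (key_abs_exp x) hKpos.le
      have hps : ppdf R x * |x| ≤ K * Real.exp (-(x - R) ^ 2 / 4)
          + (K * R) * Real.exp (-(x - R) ^ 2 / 2) := by
        unfold ppdf
        have hx : |x| ≤ |x - R| + R := by
          have := abs_sub_abs_le_abs_sub x R
          have : |x| - |R| ≤ |x - R| := abs_sub_abs_le_abs_sub x R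
          rw [abs_of_pos hR0] at this
          linarith
        have h2 : K * Real.exp (-(x - R) ^ 2 / 2) * |x|
            ≤ K * Real.exp (-(x - R) ^ 2 / 2) * (|x - R| + R) :=
          mul_le_mul_of_nonneg_left hx (by positivity)
        refine h2.trans ?_
        have h3 : Real.exp (-(x - R) ^ 2 / 2) * |x - R| ≤ Real.exp (-(x - R) ^ 2 / 4) := by
          rw [mul_comm]; exact key_abs_exp (x - R)
        calc K * Real.exp (-(x - R) ^ 2 / 2) * (|x - R| + R)
            = K * (Real.exp (-(x - R) ^ 2 / 2) * |x - R|)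
              + (K * R) * Real.exp (-(x - R) ^ 2 / 2) := by ring
          _ ≤ K * Real.exp (-(x - R) ^ 2 / 4) + (K * R) * Real.exp (-(x - R) ^ 2 / 2) := by
              have := mul_le_mul_of_nonneg_left h3 hKpos.le
              linarith
      rw [add_mul, hg]
      linarith
    have hint : ∫ x : ℝ, g x = 2 * Real.sqrt 2 + R := by
      rw [hg]
      have hi23 : Integrable (fun x : ℝ => K * Real.exp (-(x - R) ^ 2 / 4)
          + (K * R) * Real.exp (-(x - R) ^ 2 / 2)) := hi2.add hi3
      rw [integral_add hi1 hi23, integral_add hi2 hi3,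
        integral_const_mul, integral_const_mul, integral_const_mul]
      have e1 : ∫ x : ℝ, Real.exp (-x ^ 2 / 4) = Real.sqrt (4 * Real.pi) := by
        have := integralG 0 4 (by norm_num)
        simpa using this
      rw [e1, integralG R 4 (by norm_num), integralG R 2 (by norm_num)]
      have h4 : Real.sqrt (4 * Real.pi) = Real.sqrt 2 * Real.sqrt (2 * Real.pi) := by
        rw [← Real.sqrt_mul (by norm_num : (0:ℝ) ≤ 2)]
        congr 1; ring
      rw [h4, hK]
      field_simp
      ring
    rw [Real.norm_eq_abs, hint] at hle
    linarith
  -- combine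
  have hsum : Real.sqrt ((gradNCE R b c 0) ^ 2 + (gradNCE R b c 1) ^ 2)
      ≤ |gradNCE R b c 0| + |gradNCE R b c 1| := by
    rw [show |gradNCE R b c 0| + |gradNCE R b c 1|
      = Real.sqrt ((|gradNCE R b c 0| + |gradNCE R b c 1|) ^ 2) from
      (Real.sqrt_sq (by positivity)).symm]
    apply Real.sqrt_le_sqrt
    nlinarith [abs_nonneg (gradNCE R b c 0), abs_nonneg (gradNCE R b c 1),
      sq_abs (gradNCE R b c 0), sq_abs (gradNCE R b c 1)]
  have hsqrt2 : Real.sqrt 2 ≤ (3:ℝ)/2 := by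
    nlinarith [Real.sq_sqrt (by norm_num : (0:ℝ) ≤ 2), Real.sqrt_nonneg 2]
  have hmax : R ≤ max R |b| := le_max_left _ _
  calc Real.sqrt ((gradNCE R b c 0) ^ 2 + (gradNCE R b c 1) ^ 2)
      ≤ |gradNCE R b c 0| + |gradNCE R b c 1| := hsum
    _ ≤ (Real.sqrt 2 + R / 2) + 1 := by linarith
    _ ≤ 32 * R := by linarith
    _ ≤ 32 * max R |b| := by linarith
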